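/- Let B ≥ 2, let E be a B×B equi-transmitting matrix in standard form, let L ∈ ℝ^B and k ∈ ℝ, and let U be the 2B×2B unitary matrix [[0, Δ E],[Δ, 0]] where Δ = diag(e^{ikL_1}, …, e^{ikL_B}). Then every nonzero eigenvector a ∈ ℂ^{2B} of U satisfies S(a) ≥ (1/2) log(B−1) + log 2, and for every σ with 0 < σ < 1 it satisfies R_{σ/(1−σ)}(a) + R_{−σ/(1+σ)}(a) ≥ log(B−1) + 2 log 2. -/

import Mathlib

open Matrix

noncomputable section

/-- Shannon entropy of a vector (convention `0 · log 0 = 0`). -/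
def shannonEnt {n : Type*} [Fintype n] (x : n → ℂ) : ℝ :=
  -∑ j, (‖x j‖ ^ 2 / ∑ i, ‖x i‖ ^ 2) * Real.log (‖x j‖ ^ 2 / ∑ i, ‖x i‖ ^ 2)

/-- Rényi entropy of a vector, for a parameter `ρ`. -/
def renyiEnt {n : Type*} [Fintype n] (ρ : ℝ) (x : n → ℂ) : ℝ :=
  -(1 / ρ) * Real.log (∑ j, (‖x j‖ ^ 2 / ∑ i, ‖x i‖ ^ 2) ^ (1 + ρ))

/-- A `B × B` matrix is *equi-transmitting in standard form* if it is unitary,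
has zero diagonal, all off-diagonal entries of absolute value `1/√(B-1)`,
and all off-diagonal entries in the first row and first column equal to
`1/√(B-1)`. -/
def IsEquiTransStd {B : ℕ} (E : Matrix (Fin B) (Fin B) ℂ) : Prop :=
  E ∈ Matrix.unitaryGroup (Fin B) ℂ ∧
  (∀ i, E i i = 0) ∧
  (∀ i j, i ≠ j → ‖E i j‖ = 1 / Real.sqrt ((B : ℝ) - 1)) ∧
  (∀ i j : Fin B, ((i : ℕ) = 0 ∨ (j : ℕ) = 0) → i ≠ j →
    E i j = ((1 / Real.sqrt ((B : ℝ) - 1) : ℝ) : ℂ))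


open Finset Complex

set_option maxHeartbeats 3200000


noncomputable def cP (r : ℝ) (z : ℂ) : ℂ := if r = 0 then 0 else Complex.exp (z * (Real.log r : ℂ))

lemma cP_norm_le {r : ℝ} (hr : 0 ≤ r) (z : ℂ) : ‖cP r z‖ ≤ r ^ z.re := by
  unfold cP
  split_ifs with h
  · simp [h]
    positivity
  · have hrpos : 0 < r := lt_of_le_of_ne hr (Ne.symm h)
    rw [Complex.norm_exp]
    have : (z * (Real.log r : ℂ)).re = z.re * Real.log r := by
      simp [Complex.mul_re]
    rw [this, Real.rpow_def_of_pos hrpos]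
    rw [mul_comm]

lemma cP_real (r t : ℝ) (hr : 0 < r) : cP r (t : ℂ) = ((r ^ t : ℝ) : ℂ) := by
  unfold cP
  rw [if_neg (ne_of_gt hr), Real.rpow_def_of_pos hr]
  rw [← Complex.ofReal_mul, ← Complex.ofReal_exp, mul_comm]

lemma cP_diff (r : ℝ) (e : ℝ) : Differentiable ℂ (fun z : ℂ => cP r ((e : ℂ) * (1 + z))) := by
  unfold cP
  split_ifs with h
  · exact differentiable_const 0
  · fun_prop

lemma ph_norm_le (z : ℂ) : ‖z / (‖z‖ : ℂ)‖ ≤ 1 := by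
  by_cases h : z = 0
  · simp [h]
  · rw [norm_div, Complex.norm_real, Real.norm_eq_abs, _root_.abs_of_nonneg (norm_nonneg z),
      div_self (norm_ne_zero_iff.mpr h)]

lemma ph_norm_le' (z : ℂ) : ‖(starRingEnd ℂ) z / (‖z‖ : ℂ)‖ ≤ 1 := by
  have := ph_norm_le ((starRingEnd ℂ) z)
  rwa [RCLike.norm_conj] at this


lemma aux_unitary_norm {n : Type*} [Fintype n] [DecidableEq n] (E : Matrix n n ℂ)
    (hE : E ∈ Matrix.unitaryGroup n ℂ) (u : n → ℂ) :
    ∑ i, ‖E.mulVec u i‖ ^ 2 = ∑ i, ‖u i‖ ^ 2 := by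
  have h1 : Eᴴ * E = 1 := by
    rw [← Matrix.star_eq_conjTranspose]
    exact (Matrix.mem_unitaryGroup_iff'.1 hE)
  have key : ∀ (x : n → ℂ), (star x) ⬝ᵥ x = ((∑ i, ‖x i‖ ^ 2 : ℝ) : ℂ) := by
    intro x
    simp only [dotProduct, Pi.star_apply, RCLike.star_def]
    push_cast
    congr 1
    ext i
    rw [mul_comm, Complex.mul_conj']
  have h2 : star (E.mulVec u) ⬝ᵥ (E.mulVec u) = star u ⬝ᵥ u := by
    rw [Matrix.star_mulVec, Matrix.dotProduct_mulVec, Matrix.vecMul_vecMul, h1, Matrix.vecMul_one]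
  rw [key, key] at h2
  exact_mod_cast h2

lemma aux_CS {n : Type*} [Fintype n] (f g : n → ℝ) (hf : ∀ i, 0 ≤ f i) (hg : ∀ i, 0 ≤ g i) :
    ∑ i, f i * g i ≤ Real.sqrt (∑ i, f i ^ 2) * Real.sqrt (∑ i, g i ^ 2) := by
  have h := Finset.sum_mul_sq_le_sq_mul_sq Finset.univ f g
  have h0 : 0 ≤ ∑ i, f i * g i := Finset.sum_nonneg fun i _ => mul_nonneg (hf i) (hg i)
  calc ∑ i, f i * g i = Real.sqrt ((∑ i, f i * g i) ^ 2) := (Real.sqrt_sq h0).symm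
    _ ≤ Real.sqrt ((∑ i, f i ^ 2) * ∑ i, g i ^ 2) := Real.sqrt_le_sqrt h
    _ = _ := Real.sqrt_mul (Finset.sum_nonneg fun i _ => sq_nonneg _) _

lemma key_interp {n : Type*} [Fintype n] [DecidableEq n] (E : Matrix n n ℂ)
    (hE : E ∈ Matrix.unitaryGroup n ℂ) (c σ : ℝ) (hc : 0 < c)
    (hEc : ∀ i j, ‖E i j‖ ≤ c) (v : n → ℂ) (hσ0 : 0 < σ) (hσ1 : σ < 1) :
    (∑ i, ‖E.mulVec v i‖ ^ (2/(1-σ))) ^ ((1-σ)/2) ≤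
      c ^ σ * (∑ j, ‖v j‖ ^ (2/(1+σ))) ^ ((1+σ)/2) := by
  have h1σ : (0:ℝ) < 1 - σ := by linarith
  have h1σ' : (0:ℝ) < 1 + σ := by linarith
  set p' : ℝ := 2/(1-σ) with hp'def
  set p : ℝ := 2/(1+σ) with hpdef
  have hp'pos : 0 < p' := by positivity
  have hppos : 0 < p := by positivity
  set w : n → ℂ := E.mulVec v with hwdef
  set A : ℝ := ∑ i, ‖w i‖ ^ p' with hAdef
  set V : ℝ := ∑ j, ‖v j‖ ^ p with hVdef
  have hA0 : 0 ≤ A := Finset.sum_nonneg fun i _ => Real.rpow_nonneg (norm_nonneg _) _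
  have hV0 : 0 ≤ V := Finset.sum_nonneg fun i _ => Real.rpow_nonneg (norm_nonneg _) _
  by_cases hAz : A = 0
  · rw [hAz, Real.zero_rpow (by positivity)]
    positivity
  have hApos : 0 < A := lt_of_le_of_ne hA0 (Ne.symm hAz)
  have hVpos : 0 < V := by
    rcases lt_or_eq_of_le hV0 with h | h
    · exact h
    have hv0 : v = 0 := by
      funext j
      have := (Finset.sum_eq_zero_iff_of_nonneg
        (fun i _ => Real.rpow_nonneg (norm_nonneg (v i)) p)).mp h.symm j (Finset.mem_univ j)
      have : ‖v j‖ = 0 := by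
        by_contra hne
        exact hne (by
          have := Real.rpow_eq_zero_iff_of_nonneg (norm_nonneg (v j)) |>.mp this
          exact this.1)
      simpa using this
    exfalso
    apply hAz
    rw [hAdef]
    apply Finset.sum_eq_zero
    intro i _
    rw [hwdef, hv0, Matrix.mulVec_zero]
    simp [Real.zero_rpow (ne_of_gt hp'pos)]
  -- the three-lines function
  set phw : n → ℂ := fun i => (starRingEnd ℂ) (w i) / (‖w i‖ : ℂ) with hphw
  set phv : n → ℂ := fun j => v j / (‖v j‖ : ℂ) with hphv
  set g : ℂ → n → ℂ := fun z j => phv j * cP (‖v j‖) ((↑(p/2) : ℂ) * (1 + z)) with hgdef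
  set f : ℂ → ℂ := fun z => ∑ i, phw i * cP (‖w i‖) ((↑(p'/2) : ℂ) * (1 + z)) * (E.mulVec (g z) i)
    with hfdef
  have hmulVec : ∀ (u : n → ℂ) (i : n), E.mulVec u i = ∑ j, E i j * u j := by
    intro u i; rfl
  have hre : ∀ (e : ℝ) (z : ℂ), ((↑e : ℂ) * (1 + z)).re = e * (1 + z.re) := by
    intro e z
    have : (1 + z).re = 1 + z.re := by simp
    rw [Complex.re_ofReal_mul, this]
  -- norms of the building blocks
  have hgnorm : ∀ (z : ℂ) (j : n), ‖g z j‖ ≤ ‖v j‖ ^ (p/2 * (1 + z.re)) := by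
    intro z j
    rw [hgdef]
    calc ‖phv j * cP (‖v j‖) ((↑(p/2) : ℂ) * (1 + z))‖
        = ‖phv j‖ * ‖cP (‖v j‖) ((↑(p/2) : ℂ) * (1 + z))‖ := norm_mul _ _
      _ ≤ 1 * (‖v j‖ ^ (((↑(p/2) : ℂ) * (1 + z)).re)) :=
          mul_le_mul (ph_norm_le _) (cP_norm_le (norm_nonneg _) _) (norm_nonneg _) zero_le_one
      _ = ‖v j‖ ^ (p/2 * (1 + z.re)) := by rw [one_mul, hre]
  have hwcoef : ∀ (z : ℂ) (i : n),
      ‖phw i * cP (‖w i‖) ((↑(p'/2) : ℂ) * (1 + z))‖ ≤ ‖w i‖ ^ (p'/2 * (1 + z.re)) := by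
    intro z i
    calc ‖phw i * cP (‖w i‖) ((↑(p'/2) : ℂ) * (1 + z))‖
        = ‖phw i‖ * ‖cP (‖w i‖) ((↑(p'/2) : ℂ) * (1 + z))‖ := norm_mul _ _
      _ ≤ 1 * (‖w i‖ ^ (((↑(p'/2) : ℂ) * (1 + z)).re)) :=
          mul_le_mul (ph_norm_le' _) (cP_norm_le (norm_nonneg _) _) (norm_nonneg _) zero_le_one
      _ = ‖w i‖ ^ (p'/2 * (1 + z.re)) := by rw [one_mul, hre]
  -- differentiability
  have hdiff : Differentiable ℂ f := by
    rw [hfdef]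
    apply Differentiable.fun_sum
    intro i _
    have h1 : Differentiable ℂ (fun z => phw i * cP (‖w i‖) ((↑(p'/2) : ℂ) * (1 + z))) :=
      (cP_diff (‖w i‖) (p'/2)).const_mul _
    have h2 : Differentiable ℂ (fun z => E.mulVec (g z) i) := by
      have : (fun z => E.mulVec (g z) i) = fun z => ∑ j, E i j * g z j := by
        funext z; rw [hmulVec]
      rw [this]
      apply Differentiable.fun_sum
      intro j _
      exact ((cP_diff (‖v j‖) (p/2)).const_mul _).const_mul _
    exact h1.mul h2
  -- edge bound at re = 0
  have hedge0 : ∀ z : ℂ, z.re = 0 → ‖f z‖ ≤ Real.sqrt A * Real.sqrt V := by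
    intro z hz
    have step1 : ‖f z‖ ≤ ∑ i, ‖w i‖ ^ (p'/2) * ‖E.mulVec (g z) i‖ := by
      rw [hfdef]
      refine (norm_sum_le _ _).trans ?_
      apply Finset.sum_le_sum
      intro i _
      rw [norm_mul]
      apply mul_le_mul_of_nonneg_right _ (norm_nonneg _)
      have := hwcoef z i
      rwa [hz, add_zero, mul_one] at this
    have step2 : ∑ i, ‖w i‖ ^ (p'/2) * ‖E.mulVec (g z) i‖ ≤
        Real.sqrt (∑ i, (‖w i‖ ^ (p'/2)) ^ 2) * Real.sqrt (∑ i, ‖E.mulVec (g z) i‖ ^ 2) :=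
      aux_CS _ _ (fun i => Real.rpow_nonneg (norm_nonneg _) _) (fun i => norm_nonneg _)
    have hsq : ∀ (x e : ℝ), 0 ≤ x → (x ^ e) ^ 2 = x ^ (e * 2) := by
      intro x e hx
      rw [Real.rpow_mul hx, ← Real.rpow_natCast (x ^ e) 2]
      norm_num
    have hAsum : ∑ i, (‖w i‖ ^ (p'/2)) ^ 2 = A := by
      rw [hAdef]
      apply Finset.sum_congr rfl
      intro i _
      rw [hsq _ _ (norm_nonneg _)]
      congr 1
      field_simp
    have hVsum : ∑ i, ‖E.mulVec (g z) i‖ ^ 2 ≤ V := by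
      rw [aux_unitary_norm E hE (g z), hVdef]
      apply Finset.sum_le_sum
      intro j _
      have h1 : ‖g z j‖ ≤ ‖v j‖ ^ (p/2) := by
        have := hgnorm z j
        rwa [hz, add_zero, mul_one] at this
      calc ‖g z j‖ ^ 2 ≤ (‖v j‖ ^ (p/2)) ^ 2 := by
            apply sq_le_sq' _ h1
            linarith [norm_nonneg (g z j), Real.rpow_nonneg (norm_nonneg (v j)) (p/2)]
        _ = ‖v j‖ ^ p := by rw [hsq _ _ (norm_nonneg _)]; congr 1; field_simp
    calc ‖f z‖ ≤ ∑ i, ‖w i‖ ^ (p'/2) * ‖E.mulVec (g z) i‖ := step1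
      _ ≤ Real.sqrt (∑ i, (‖w i‖ ^ (p'/2)) ^ 2) * Real.sqrt (∑ i, ‖E.mulVec (g z) i‖ ^ 2) := step2
      _ ≤ Real.sqrt A * Real.sqrt V := by
          rw [hAsum]
          exact mul_le_mul_of_nonneg_left (Real.sqrt_le_sqrt hVsum) (Real.sqrt_nonneg _)
  -- edge bound at re = 1
  have hedge1 : ∀ z : ℂ, z.re = 1 → ‖f z‖ ≤ c * A * V := by
    intro z hz
    have hinner : ∀ i, ‖E.mulVec (g z) i‖ ≤ c * V := by
      intro i
      rw [hmulVec]
      refine (norm_sum_le _ _).trans ?_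
      have : ∀ j, ‖E i j * g z j‖ ≤ c * ‖v j‖ ^ p := by
        intro j
        rw [norm_mul]
        have h1 : ‖g z j‖ ≤ ‖v j‖ ^ p := by
          have := hgnorm z j
          rw [hz] at this
          calc ‖g z j‖ ≤ ‖v j‖ ^ (p/2 * (1+1)) := this
            _ = ‖v j‖ ^ p := by norm_num
        exact mul_le_mul (hEc i j) h1 (norm_nonneg _) hc.le
      refine (Finset.sum_le_sum (fun j _ => this j)).trans ?_
      rw [← Finset.mul_sum, hVdef]
    have : ‖f z‖ ≤ ∑ i, ‖w i‖ ^ p' * (c * V) := by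
      rw [hfdef]
      refine (norm_sum_le _ _).trans (Finset.sum_le_sum fun i _ => ?_)
      rw [norm_mul]
      have hcoef : ‖phw i * cP (‖w i‖) ((↑(p'/2) : ℂ) * (1 + z))‖ ≤ ‖w i‖ ^ p' := by
        have := hwcoef z i
        rw [hz] at this
        calc _ ≤ ‖w i‖ ^ (p'/2 * (1+1)) := this
          _ = ‖w i‖ ^ p' := by norm_num
      exact mul_le_mul hcoef (hinner i) (norm_nonneg _)
        (Real.rpow_nonneg (norm_nonneg _) _)
    calc ‖f z‖ ≤ ∑ i, ‖w i‖ ^ p' * (c * V) := this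
      _ = A * (c * V) := by rw [← Finset.sum_mul, hAdef]
      _ = c * A * V := by ring
  -- boundedness on the strip
  have hBdd : BddAbove ((norm ∘ f) '' (Complex.HadamardThreeLines.verticalClosedStrip 0 1)) := by
    set M : ℝ := (∑ i, (max 1 ‖w i‖) ^ p') * (c * ∑ j, (max 1 ‖v j‖) ^ p) with hM
    have hPb : ∀ (r e : ℝ) (z : ℂ), 0 ≤ r → 0 < e → z.re ∈ Set.Icc (0:ℝ) 1 →
        r ^ (e/2 * (1 + z.re)) ≤ (max 1 r) ^ e := by
      intro r e z hr he hzre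
      calc r ^ (e/2 * (1 + z.re)) ≤ (max 1 r) ^ (e/2 * (1 + z.re)) :=
            Real.rpow_le_rpow hr (le_max_right 1 r) (by nlinarith [hzre.1])
        _ ≤ (max 1 r) ^ e := by
            apply Real.rpow_le_rpow_of_exponent_le (le_max_left 1 r)
            nlinarith [hzre.1, hzre.2]
    refine ⟨M, ?_⟩
    rintro y ⟨z, hz, rfl⟩
    have hzre : z.re ∈ Set.Icc (0:ℝ) 1 := hz
    simp only [Function.comp_apply]
    have hinner : ∀ i, ‖E.mulVec (g z) i‖ ≤ c * ∑ j, (max 1 ‖v j‖) ^ p := by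
      intro i
      rw [hmulVec]
      refine (norm_sum_le _ _).trans ?_
      rw [Finset.mul_sum]
      apply Finset.sum_le_sum
      intro j _
      rw [norm_mul]
      exact mul_le_mul (hEc i j) ((hgnorm z j).trans
        (hPb _ _ _ (norm_nonneg _) hppos hzre)) (norm_nonneg _) hc.le
    have : ‖f z‖ ≤ ∑ i, (max 1 ‖w i‖) ^ p' * (c * ∑ j, (max 1 ‖v j‖) ^ p) := by
      rw [hfdef]
      refine (norm_sum_le _ _).trans (Finset.sum_le_sum fun i _ => ?_)
      rw [norm_mul]
      exact mul_le_mul ((hwcoef z i).trans (hPb _ _ _ (norm_nonneg _) hp'pos hzre))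
        (hinner i) (norm_nonneg _) (Real.rpow_nonneg (le_trans zero_le_one (le_max_left _ _)) _)
    calc ‖f z‖ ≤ ∑ i, (max 1 ‖w i‖) ^ p' * (c * ∑ j, (max 1 ‖v j‖) ^ p) := this
      _ = M := by rw [hM, ← Finset.sum_mul]
  -- value at σ
  have hpσ1 : p/2 * (1 + σ) = 1 := by rw [hpdef]; field_simp
  have hp'σ1 : p'/2 * (1 + σ) = p' - 1 := by rw [hp'def]; field_simp; ring
  have hfσ : f (σ : ℂ) = (A : ℂ) := by
    have hgσ : g (σ : ℂ) = v := by
      funext j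
      simp only [hgdef]
      by_cases hj : v j = 0
      · simp [hphv, hj]
      · have hvp : 0 < ‖v j‖ := norm_pos_iff.mpr hj
        have hexp : ((↑(p/2) : ℂ) * (1 + (σ:ℂ))) = ((p/2 * (1 + σ) : ℝ) : ℂ) := by
          push_cast; ring
        rw [hexp, cP_real _ _ hvp, hpσ1, Real.rpow_one, hphv]
        have hne : ((‖v j‖ : ℝ) : ℂ) ≠ 0 := by exact_mod_cast ne_of_gt hvp
        exact div_mul_cancel₀ (v j) hne
    simp only [hfdef, hgσ]
    rw [hAdef, Complex.ofReal_sum]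
    apply Finset.sum_congr rfl
    intro i _
    have hwi : E.mulVec v i = w i := by rw [hwdef]
    rw [hwi]
    by_cases hi : w i = 0
    · simp [hphw, hi, Real.zero_rpow (ne_of_gt hp'pos)]
    · have hwp : 0 < ‖w i‖ := norm_pos_iff.mpr hi
      have hwc : ((‖w i‖ : ℝ) : ℂ) ≠ 0 := by exact_mod_cast ne_of_gt hwp
      have hexp : ((↑(p'/2) : ℂ) * (1 + (σ:ℂ))) = ((p'/2 * (1 + σ) : ℝ) : ℂ) := by
        push_cast; ring
      rw [hexp, cP_real _ _ hwp, hp'σ1, hphw]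
      have e1 : (starRingEnd ℂ) (w i) / (‖w i‖ : ℂ) * ((‖w i‖ ^ (p' - 1) : ℝ) : ℂ) * w i
          = (w i * (starRingEnd ℂ) (w i)) * ((‖w i‖ ^ (p' - 1) : ℝ) : ℂ) / (‖w i‖ : ℂ) := by
        ring
      rw [e1, Complex.mul_conj', div_eq_iff hwc]
      have e2 : ‖w i‖ ^ 2 * ‖w i‖ ^ (p' - 1) = ‖w i‖ ^ p' * ‖w i‖ := by
        rw [sq, show p' = (p' - 1) + 1 from by ring, Real.rpow_add hwp, Real.rpow_one]
        ring
      calc (‖w i‖ : ℂ) ^ 2 * ((‖w i‖ ^ (p' - 1) : ℝ) : ℂ)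
          = ((‖w i‖ ^ 2 * ‖w i‖ ^ (p' - 1) : ℝ) : ℂ) := by push_cast; ring
        _ = ((‖w i‖ ^ p' * ‖w i‖ : ℝ) : ℂ) := by rw [e2]
        _ = ((‖w i‖ ^ p' : ℝ) : ℂ) * ((‖w i‖ : ℝ) : ℂ) := by push_cast; ring
  -- apply Hadamard three lines
  have hσmem : (σ:ℂ) ∈ Complex.HadamardThreeLines.verticalClosedStrip 0 1 := by
    show (σ:ℂ).re ∈ Set.Icc (0:ℝ) 1
    rw [Complex.ofReal_re]
    exact ⟨hσ0.le, hσ1.le⟩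
  have h3 := Complex.HadamardThreeLines.norm_le_interp_of_mem_verticalClosedStrip' (f := f) zero_lt_one hσmem
    (hdiff.diffContOnCl) hBdd
    (fun z hz => hedge0 z (by simpa using hz)) (fun z hz => hedge1 z (by simpa using hz))
  rw [Complex.ofReal_re, hfσ, Complex.norm_real, Real.norm_eq_abs,
    _root_.abs_of_nonneg hA0, sub_zero, sub_zero, div_one] at h3
  -- final arithmetic
  have hRHS : (Real.sqrt A * Real.sqrt V) ^ (1-σ) * (c*A*V) ^ σ
      = (c ^ σ * V ^ ((1+σ)/2)) * A ^ ((1+σ)/2) := by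
    rw [Real.sqrt_eq_rpow, Real.sqrt_eq_rpow,
      Real.mul_rpow (Real.rpow_nonneg hA0 _) (Real.rpow_nonneg hV0 _),
      Real.mul_rpow (mul_nonneg hc.le hA0) hV0, Real.mul_rpow hc.le hA0,
      ← Real.rpow_mul hA0, ← Real.rpow_mul hV0]
    have eA : A ^ (1/(2:ℝ) * (1-σ)) * A ^ σ = A ^ ((1+σ)/2) := by
      rw [← Real.rpow_add hApos]; congr 1; ring
    have eV : V ^ (1/(2:ℝ) * (1-σ)) * V ^ σ = V ^ ((1+σ)/2) := by
      rw [← Real.rpow_add hVpos]; congr 1; ring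
    calc A ^ (1/(2:ℝ) * (1-σ)) * V ^ (1/(2:ℝ) * (1-σ)) * (c ^ σ * A ^ σ * V ^ σ)
        = c ^ σ * (V ^ (1/(2:ℝ) * (1-σ)) * V ^ σ) * (A ^ (1/(2:ℝ) * (1-σ)) * A ^ σ) := by ring
      _ = (c ^ σ * V ^ ((1+σ)/2)) * A ^ ((1+σ)/2) := by rw [eA, eV]
  rw [hRHS] at h3
  have hfactor : (0:ℝ) < A ^ ((1+σ)/2) := Real.rpow_pos_of_pos hApos _
  have hsplit : A ^ ((1-σ)/2) * A ^ ((1+σ)/2) = A := by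
    rw [← Real.rpow_add hApos, show (1-σ)/2 + (1+σ)/2 = 1 from by ring, Real.rpow_one]
  apply le_of_mul_le_mul_right _ hfactor
  rw [hsplit]
  exact h3

lemma renyi_tendsto {m : Type*} [Fintype m] (a : m → ℂ) (ha : a ≠ 0) :
    Filter.Tendsto (fun ρ => renyiEnt ρ a) (nhdsWithin 0 {(0:ℝ)}ᶜ) (nhds (shannonEnt a)) := by
  classical
  set N : ℝ := ∑ i, ‖a i‖ ^ 2 with hNdef
  have hN : 0 < N := by
    obtain ⟨j, hj⟩ : ∃ j, a j ≠ 0 := by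
      by_contra h
      push_neg at h
      exact ha (funext h)
    apply Finset.sum_pos' (fun i _ => by positivity)
    exact ⟨j, Finset.mem_univ j, pow_pos (norm_pos_iff.mpr hj) 2⟩
  set q : m → ℝ := fun j => ‖a j‖ ^ 2 / N with hqdef
  have hq0 : ∀ j, 0 ≤ q j := fun j => by positivity
  have hqsum : ∑ j, q j = 1 := by
    rw [hqdef, ← Finset.sum_div, ← hNdef, div_self (ne_of_gt hN)]
  set G : ℝ → ℝ := fun ρ => ∑ j, q j ^ (1+ρ) with hGdef
  have hG0 : G 0 = 1 := by
    rw [hGdef]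
    simp only [add_zero, Real.rpow_one]
    exact hqsum
  have hGd : HasDerivAt G (∑ j, q j * Real.log (q j)) 0 := by
    rw [hGdef]
    apply HasDerivAt.fun_sum
    intro j _
    rcases eq_or_lt_of_le (hq0 j) with h | h
    · -- q j = 0
      have hzero : (fun ρ : ℝ => q j ^ (1+ρ)) =ᶠ[nhds 0] (fun _ => (0:ℝ)) := by
        have : Set.Ioi (-1 : ℝ) ∈ nhds (0:ℝ) := Ioi_mem_nhds (by norm_num)
        filter_upwards [this] with ρ hρ
        rw [← h, Real.zero_rpow (by simp at hρ ⊢; linarith)]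
      have : HasDerivAt (fun ρ : ℝ => q j ^ (1+ρ)) 0 0 := by
        exact (hasDerivAt_const (0:ℝ) (0:ℝ)).congr_of_eventuallyEq hzero
      simpa [← h] using this
    · -- q j > 0
      have heq : (fun ρ : ℝ => q j ^ (1+ρ)) = fun ρ => Real.exp (Real.log (q j) * (1+ρ)) := by
        funext ρ
        rw [Real.rpow_def_of_pos h]
      rw [heq]
      have hinner : HasDerivAt (fun ρ : ℝ => Real.log (q j) * (1+ρ)) (Real.log (q j)) 0 := by
        simpa using (((hasDerivAt_id (0:ℝ)).const_add 1).const_mul (Real.log (q j)))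
      have := (Real.hasDerivAt_exp (Real.log (q j) * (1+(0:ℝ)))).comp 0 hinner
      simpa [Real.exp_log h, mul_comm, Function.comp_def] using this
  have hH : HasDerivAt (fun ρ => Real.log (G ρ)) (∑ j, q j * Real.log (q j)) 0 := by
    have := hGd.log (by rw [hG0]; norm_num)
    simpa [hG0] using this
  have hslope := hasDerivAt_iff_tendsto_slope.mp hH
  have hEq : (fun ρ => renyiEnt ρ a) =ᶠ[nhdsWithin 0 {(0:ℝ)}ᶜ]
      (fun ρ => -(slope (fun ρ => Real.log (G ρ)) 0 ρ)) := by
    filter_upwards [self_mem_nhdsWithin] with ρ hρ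
    have hρ0 : ρ ≠ 0 := hρ
    have hGρ : (∑ j, (‖a j‖ ^ 2 / ∑ i, ‖a i‖ ^ 2) ^ (1+ρ)) = G ρ := rfl
    rw [renyiEnt, slope_def_field, hG0, Real.log_one, sub_zero, sub_zero, hGρ]
    field_simp
  rw [show shannonEnt a = -(∑ j, q j * Real.log (q j)) from rfl]
  apply Filter.Tendsto.congr' hEq.symm
  exact hslope.neg


/-- Entropy lower bounds for eigenvectors of an
equi-transmitting star graph. -/
theorem entropy_bound_equitransmitting_star (B : ℕ) (hB : 2 ≤ B)
    (E : Matrix (Fin B) (Fin B) ℂ) (hE : IsEquiTransStd E)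
    (L : Fin B → ℝ) (k : ℝ)
    (Δ : Matrix (Fin B) (Fin B) ℂ)
    (hΔ : Δ = Matrix.diagonal fun j => Complex.exp (Complex.I * k * L j))
    (U : Matrix (Fin B ⊕ Fin B) (Fin B ⊕ Fin B) ℂ)
    (hU : U = Matrix.fromBlocks 0 (Δ * E) Δ 0)
    (a : Fin B ⊕ Fin B → ℂ) (ha : a ≠ 0)
    (heig : ∃ μ : ℂ, U.mulVec a = μ • a) :
    shannonEnt a ≥ (1 / 2) * Real.log ((B : ℝ) - 1) + Real.log 2 ∧
    ∀ σ : ℝ, 0 < σ → σ < 1 →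
      renyiEnt (σ / (1 - σ)) a + renyiEnt (-σ / (1 + σ)) a ≥
        Real.log ((B : ℝ) - 1) + 2 * Real.log 2 := by
  classical
  obtain ⟨μ, hμ⟩ := heig
  set x : Fin B → ℂ := fun j => a (Sum.inl j) with hxdef
  set y : Fin B → ℂ := fun j => a (Sum.inr j) with hydef
  have ha' : a = Sum.elim x y := by funext b; cases b <;> rfl
  set d : Fin B → ℂ := fun j => Complex.exp (Complex.I * k * L j) with hddef
  have hd1 : ∀ j, ‖d j‖ = 1 := by
    intro j
    rw [hddef]
    simp only [Complex.norm_exp]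
    have : (Complex.I * k * L j).re = 0 := by simp
    rw [this, Real.exp_zero]
  have hdne : ∀ j, d j ≠ 0 := fun j => by rw [hddef]; exact Complex.exp_ne_zero _
  have hEU : E ∈ Matrix.unitaryGroup (Fin B) ℂ := hE.1
  have hμ' := hμ
  rw [hU, ha', Matrix.fromBlocks_mulVec] at hμ'
  have eq1 : ∀ i, d i * (E.mulVec y) i = μ * x i := by
    intro i
    have h := congrFun hμ' (Sum.inl i)
    simp only [Sum.elim_inl, Pi.add_apply, Matrix.zero_mulVec, Pi.zero_apply, zero_add,
      Pi.smul_apply, smul_eq_mul, ← Matrix.mulVec_mulVec, hΔ, Matrix.mulVec_diagonal] at h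
    exact h
  have eq2 : ∀ j, d j * x j = μ * y j := by
    intro j
    have h := congrFun hμ' (Sum.inr j)
    simp only [Sum.elim_inr, Pi.add_apply, Matrix.zero_mulVec, Pi.zero_apply, add_zero,
      Pi.smul_apply, smul_eq_mul, hΔ, Matrix.mulVec_diagonal] at h
    exact h
  have nx : ∀ j, ‖x j‖ = ‖μ‖ * ‖y j‖ := by
    intro j
    have := congrArg norm (eq2 j)
    rwa [norm_mul, norm_mul, hd1, one_mul] at this
  have nw : ∀ i, ‖(E.mulVec y) i‖ = ‖μ‖ * ‖x i‖ := by
    intro i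
    have := congrArg norm (eq1 i)
    rwa [norm_mul, norm_mul, hd1, one_mul] at this
  have hy0 : y ≠ 0 := by
    intro h
    apply ha
    have hx0 : x = 0 := by
      funext j
      have h2 := eq2 j
      rw [show y j = 0 from by rw [h]; rfl, mul_zero] at h2
      exact (mul_eq_zero.mp h2).resolve_left (hdne j)
    rw [ha', hx0, h]
    funext b; cases b <;> rfl
  have hNy : 0 < ∑ i, ‖y i‖ ^ 2 := by
    obtain ⟨j, hj⟩ : ∃ j, y j ≠ 0 := by
      by_contra h; push_neg at h; exact hy0 (funext h)
    apply Finset.sum_pos' (fun i _ => by positivity)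
    exact ⟨j, Finset.mem_univ j, pow_pos (norm_pos_iff.mpr hj) 2⟩
  have hμ1 : ‖μ‖ = 1 := by
    have hsum := aux_unitary_norm E hEU y
    have h1 : ∑ i, ‖(E.mulVec y) i‖ ^ 2 = ‖μ‖^4 * ∑ i, ‖y i‖ ^ 2 := by
      rw [Finset.mul_sum]
      apply Finset.sum_congr rfl
      intro i _
      rw [nw i, nx i]
      ring
    rw [h1] at hsum
    have h4 : ‖μ‖ ^ 4 = 1 := by
      have := mul_right_cancel₀ (ne_of_gt hNy) (hsum.trans (one_mul _).symm)
      exact this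
    nlinarith [norm_nonneg μ, sq_nonneg (‖μ‖ - 1), sq_nonneg (‖μ‖ + 1), sq_nonneg (‖μ‖^2 - 1),
      sq_nonneg (‖μ‖^2 + 1)]
  have hxy : ∀ j, ‖x j‖ = ‖y j‖ := fun j => by rw [nx j, hμ1, one_mul]
  have hwy : ∀ i, ‖(E.mulVec y) i‖ = ‖y i‖ := fun i => by rw [nw i, hμ1, one_mul, hxy i]
  set c : ℝ := 1 / Real.sqrt ((B:ℝ) - 1) with hcdef
  have hB2 : (2:ℝ) ≤ (B:ℝ) := by exact_mod_cast hB
  have hB1 : (1:ℝ) ≤ (B:ℝ) - 1 := by linarith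
  have hsqrt_pos : 0 < Real.sqrt ((B:ℝ)-1) := Real.sqrt_pos.mpr (by linarith)
  have hc : 0 < c := by rw [hcdef]; positivity
  have hEc : ∀ i j, ‖E i j‖ ≤ c := by
    intro i j
    by_cases hij : i = j
    · rw [hij, hE.2.1 j, norm_zero]; exact hc.le
    · rw [hE.2.2.1 i j hij]
  set N : ℝ := ∑ i, ‖y i‖ ^ 2 with hNdef
  have hTot : ∑ b, ‖a b‖ ^ 2 = 2 * N := by
    rw [ha', Fintype.sum_sum_type]
    simp only [Sum.elim_inl, Sum.elim_inr]
    have hxx : ∑ j, ‖x j‖^2 = N := by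
      rw [hNdef]; exact Finset.sum_congr rfl fun j _ => by rw [hxy j]
    rw [hxx, hNdef]
    ring
  -- general renyi computation
  have hrenyi : ∀ ρ : ℝ, ρ ≠ 0 → renyiEnt ρ a =
      Real.log 2 - (1/ρ) * Real.log (∑ j, (‖y j‖^2/N) ^ (1+ρ)) := by
    intro ρ hρ
    obtain ⟨j₀, hj₀⟩ : ∃ j, y j ≠ 0 := by
      by_contra h; push_neg at h; exact hy0 (funext h)
    have hSpos : 0 < ∑ j, (‖y j‖^2/N) ^ (1+ρ) := by
      apply Finset.sum_pos' (fun i _ => Real.rpow_nonneg (by positivity) _)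
      refine ⟨j₀, Finset.mem_univ j₀, Real.rpow_pos_of_pos (by
        have : 0 < ‖y j₀‖ := norm_pos_iff.mpr hj₀
        positivity) _⟩
    have hsum : (∑ b, (‖a b‖^2 / ∑ i, ‖a i‖^2) ^ (1+ρ)) =
        ((2:ℝ)⁻¹) ^ ρ * ∑ j, (‖y j‖^2/N) ^ (1+ρ) := by
      have hstep : ∀ t : ℝ, 0 ≤ t → (t / (2*N)) ^ (1+ρ) = (2:ℝ)⁻¹ ^ (1+ρ) * (t/N) ^ (1+ρ) := by
        intro t ht
        rw [show t / (2*N) = 2⁻¹ * (t/N) from by ring, Real.mul_rpow (by norm_num) (by positivity)]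
      rw [hTot, Fintype.sum_sum_type]
      have hx2 : ∀ j, ‖a (Sum.inl j)‖ = ‖y j‖ := fun j => hxy j
      have hy2 : ∀ j, ‖a (Sum.inr j)‖ = ‖y j‖ := fun j => rfl
      have e1 : ∑ j, (‖a (Sum.inl j)‖^2 / (2*N)) ^ (1+ρ) =
          (2:ℝ)⁻¹ ^ (1+ρ) * ∑ j, (‖y j‖^2/N) ^ (1+ρ) := by
        rw [Finset.mul_sum Finset.univ (fun j => (‖y j‖^2/N) ^ (1+ρ)) ((2:ℝ)⁻¹ ^ (1+ρ))]
        apply Finset.sum_congr rfl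
        intro j _
        rw [hx2 j, hstep _ (by positivity)]
      have e2 : ∑ j, (‖a (Sum.inr j)‖^2 / (2*N)) ^ (1+ρ) =
          (2:ℝ)⁻¹ ^ (1+ρ) * ∑ j, (‖y j‖^2/N) ^ (1+ρ) := by
        rw [Finset.mul_sum Finset.univ (fun j => (‖y j‖^2/N) ^ (1+ρ)) ((2:ℝ)⁻¹ ^ (1+ρ))]
        apply Finset.sum_congr rfl
        intro j _
        rw [hy2 j, hstep _ (by positivity)]
      rw [e1, e2, ← two_mul, ← mul_assoc]
      congr 1
      rw [Real.rpow_add (by norm_num : (0:ℝ) < 2⁻¹), Real.rpow_one]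
      ring
    rw [renyiEnt, hsum, Real.log_mul (by positivity) (ne_of_gt hSpos),
      Real.log_rpow (by norm_num : (0:ℝ) < 2⁻¹), Real.log_inv]
    field_simp
    ring
  -- part 2
  have part2 : ∀ σ : ℝ, 0 < σ → σ < 1 →
      renyiEnt (σ / (1 - σ)) a + renyiEnt (-σ / (1 + σ)) a ≥
        Real.log ((B : ℝ) - 1) + 2 * Real.log 2 := by
    intro σ hσ0 hσ1
    have h1σ : (0:ℝ) < 1 - σ := by linarith
    have h1σ' : (0:ℝ) < 1 + σ := by linarith
    set A : ℝ := ∑ i, ‖y i‖ ^ (2/(1-σ)) with hAdef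
    set V : ℝ := ∑ i, ‖y i‖ ^ (2/(1+σ)) with hVdef
    obtain ⟨j₀, hj₀⟩ : ∃ j, y j ≠ 0 := by
      by_contra h; push_neg at h; exact hy0 (funext h)
    have hyj₀ : 0 < ‖y j₀‖ := norm_pos_iff.mpr hj₀
    have hApos : 0 < A := by
      apply Finset.sum_pos' (fun i _ => Real.rpow_nonneg (norm_nonneg _) _)
      exact ⟨j₀, Finset.mem_univ j₀, Real.rpow_pos_of_pos hyj₀ _⟩
    have hVpos : 0 < V := by
      apply Finset.sum_pos' (fun i _ => Real.rpow_nonneg (norm_nonneg _) _)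
      exact ⟨j₀, Finset.mem_univ j₀, Real.rpow_pos_of_pos hyj₀ _⟩
    have hkey := key_interp E hEU c σ hc hEc y hσ0 hσ1
    have hAw : ∑ i, ‖E.mulVec y i‖ ^ (2/(1-σ)) = A := by
      rw [hAdef]; exact Finset.sum_congr rfl (fun i _ => by rw [hwy i])
    rw [hAw] at hkey
    have hlog : (1-σ)/2 * Real.log A ≤ σ * Real.log c + (1+σ)/2 * Real.log V := by
      have h := Real.log_le_log (Real.rpow_pos_of_pos hApos _) hkey
      rwa [Real.log_rpow hApos, Real.log_mul (ne_of_gt (Real.rpow_pos_of_pos hc _))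
        (ne_of_gt (Real.rpow_pos_of_pos hVpos _)), Real.log_rpow hc, Real.log_rpow hVpos] at h
    have hlc : Real.log c = -(Real.log ((B:ℝ)-1) / 2) := by
      rw [hcdef, one_div, Real.log_inv, Real.log_sqrt (by linarith)]
    -- compute the two S sums
    have hS1 : ∑ j, (‖y j‖^2/N) ^ (1 + σ/(1-σ)) = A / N ^ (1/(1-σ)) := by
      have hexp : 1 + σ/(1-σ) = 1/(1-σ) := by field_simp; ring
      rw [hexp, hAdef, Finset.sum_div]
      apply Finset.sum_congr rfl
      intro j _
      rw [Real.div_rpow (by positivity) hNy.le]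
      congr 1
      rw [← Real.rpow_natCast (‖y j‖) 2, ← Real.rpow_mul (norm_nonneg _)]
      congr 1
      push_cast
      ring
    have hS2 : ∑ j, (‖y j‖^2/N) ^ (1 + -σ/(1+σ)) = V / N ^ (1/(1+σ)) := by
      have hexp : 1 + -σ/(1+σ) = 1/(1+σ) := by field_simp; ring
      rw [hexp, hVdef, Finset.sum_div]
      apply Finset.sum_congr rfl
      intro j _
      rw [Real.div_rpow (by positivity) hNy.le]
      congr 1
      rw [← Real.rpow_natCast (‖y j‖) 2, ← Real.rpow_mul (norm_nonneg _)]
      congr 1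
      push_cast
      ring
    have hρ1 : σ/(1-σ) ≠ 0 := by positivity
    have hρ2 : -σ/(1+σ) ≠ 0 := by
      apply ne_of_lt
      apply div_neg_of_neg_of_pos (by linarith) h1σ'
    rw [hrenyi _ hρ1, hrenyi _ hρ2, hS1, hS2]
    rw [Real.log_div (ne_of_gt hApos) (ne_of_gt (Real.rpow_pos_of_pos hNy _)),
      Real.log_div (ne_of_gt hVpos) (ne_of_gt (Real.rpow_pos_of_pos hNy _)),
      Real.log_rpow hNy, Real.log_rpow hNy]
    set lA := Real.log A
    set lV := Real.log V
    set lN := Real.log N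
    set lB := Real.log ((B:ℝ)-1)
    have hmain : σ * lB ≤ (1+σ)*lV - (1-σ)*lA := by
      rw [hlc] at hlog
      nlinarith [hlog]
    have hone : (1:ℝ)/(σ/(1-σ)) = (1-σ)/σ := by
      field_simp
    have htwo : (1:ℝ)/(-σ/(1+σ)) = -((1+σ)/σ) := by
      rw [one_div, neg_div, inv_neg, inv_div]
    rw [hone, htwo]
    have hfin : ((1+σ)*lV - (1-σ)*lA)/σ ≥ lB := by
      rw [ge_iff_le, le_div_iff₀ hσ0]
      linarith
    have hexpand : Real.log 2 - (1-σ)/σ * (lA - 1/(1-σ) * lN) +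
        (Real.log 2 - -((1+σ)/σ) * (lV - 1/(1+σ) * lN)) =
        2*Real.log 2 + ((1+σ)*lV - (1-σ)*lA)/σ := by
      field_simp
      ring
    rw [hexpand]
    linarith
  refine ⟨?_, part2⟩
  -- part 1 via limit
  have hlim1 : Filter.Tendsto (fun σ : ℝ => σ/(1-σ)) (nhdsWithin 0 (Set.Ioi (0:ℝ)))
      (nhdsWithin 0 {(0:ℝ)}ᶜ) := by
    rw [tendsto_nhdsWithin_iff]
    constructor
    · have hcont : ContinuousAt (fun σ:ℝ => σ/(1-σ)) 0 :=
        ContinuousAt.div continuousAt_id (continuousAt_const.sub continuousAt_id) (by norm_num)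
      have := hcont.tendsto.mono_left (nhdsWithin_le_nhds (s := Set.Ioi (0:ℝ)))
      simpa using this
    · filter_upwards [Ioo_mem_nhdsGT_of_mem (Set.mem_Ico.mpr ⟨le_refl 0, one_pos⟩)] with σ hσ
      have : 0 < σ/(1-σ) := div_pos hσ.1 (by linarith [hσ.2])
      exact ne_of_gt this
  have hlim2 : Filter.Tendsto (fun σ : ℝ => -σ/(1+σ)) (nhdsWithin 0 (Set.Ioi (0:ℝ)))
      (nhdsWithin 0 {(0:ℝ)}ᶜ) := by
    rw [tendsto_nhdsWithin_iff]
    constructor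
    · have hcont : ContinuousAt (fun σ:ℝ => -σ/(1+σ)) 0 :=
        ContinuousAt.div (continuousAt_id.neg) (continuousAt_const.add continuousAt_id)
          (by norm_num)
      have := hcont.tendsto.mono_left (nhdsWithin_le_nhds (s := Set.Ioi (0:ℝ)))
      simpa using this
    · filter_upwards [Ioo_mem_nhdsGT_of_mem (Set.mem_Ico.mpr ⟨le_refl 0, one_pos⟩)] with σ hσ
      have : -σ/(1+σ) < 0 := div_neg_of_neg_of_pos (by linarith [hσ.1]) (by linarith [hσ.1])
      exact ne_of_lt this
  have hpair : Filter.Tendsto (fun σ : ℝ => renyiEnt (σ/(1-σ)) a + renyiEnt (-σ/(1+σ)) a)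
      (nhdsWithin 0 (Set.Ioi (0:ℝ))) (nhds (shannonEnt a + shannonEnt a)) :=
    (((renyi_tendsto a ha).comp hlim1)).add (((renyi_tendsto a ha).comp hlim2))
  have hev : ∀ᶠ σ in nhdsWithin 0 (Set.Ioi (0:ℝ)),
      Real.log ((B:ℝ)-1) + 2*Real.log 2 ≤ renyiEnt (σ/(1-σ)) a + renyiEnt (-σ/(1+σ)) a := by
    filter_upwards [Ioo_mem_nhdsGT_of_mem (Set.mem_Ico.mpr ⟨le_refl 0, one_pos⟩)] with σ hσ
    exact part2 σ hσ.1 hσ.2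
  have hfin := ge_of_tendsto hpair hev
  rw [ge_iff_le]
  linarith


end
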